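/- Let (a_m)_{m≥0} be a sequence of nonnegative real numbers. Then there exists a non-increasing sequence (c_m)_{m≥0} of positive real numbers such that for all integers n ≥ 1 and r ≥ 0, the family of nonnegative reals (c_{m_1} c_{m_2} ⋯ c_{m_n} · a_{m_1 + m_2 + ⋯ + m_n + r}) indexed by tuples (m_1, …, m_n) ∈ ℕ^n is summable, i.e. Σ_{m_1,…,m_n ≥ 0} c_{m_1} ⋯ c_{m_n} a_{m_1+⋯+m_n+r} < ∞. -/
import Mathlib

lemma summable_pi_prod (g : ℕ → ℝ) (hg : Summable g) (h0 : ∀ k, 0 ≤ g k) :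
    ∀ n : ℕ, Summable (fun m : Fin n → ℕ => ∏ i, g (m i)) := by
  intro n
  induction n with
  | zero => exact summable_of_finite_support (Set.toFinite _)
  | succ n ih =>
      have h := (hg.mul_of_nonneg ih h0 (fun m => Finset.prod_nonneg fun i _ => h0 _))
      rw [← (Fin.consEquiv fun _ : Fin (n+1) => ℕ).summable_iff]
      refine h.congr fun p => ?_
      simp [Fin.prod_univ_succ]

/-- Given nonnegative `(a_m)`, there is a non-increasing positive sequence
`(c_m)` such that `Σ_{m₁,…,m_n} c_{m₁}⋯c_{m_n} a_{m₁+⋯+m_n+r} < ∞` for all `n ≥ 1, r ≥ 0`. -/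
theorem stmt5 (a : ℕ → ℝ) (ha : ∀ m, 0 ≤ a m) :
    ∃ c : ℕ → ℝ, (∀ m, 0 < c m) ∧ Antitone c ∧
      ∀ (n : ℕ), 1 ≤ n → ∀ r : ℕ,
        Summable (fun m : Fin n → ℕ => (∏ i, c (m i)) * a ((∑ i, m i) + r)) := by
  set b : ℕ → ℝ := fun m => 1 + ∑ k ∈ Finset.range (m+1), a k with hb
  have hb1 : ∀ m, 1 ≤ b m := by
    intro m
    have : 0 ≤ ∑ k ∈ Finset.range (m+1), a k :=
      Finset.sum_nonneg fun k _ => ha k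
    simp [hb]; linarith
  have hb0 : ∀ m, 0 < b m := fun m => lt_of_lt_of_le one_pos (hb1 m)
  have hbmono : Monotone b := by
    intro m m' hmm'
    refine add_le_add le_rfl ?_
    exact Finset.sum_le_sum_of_subset_of_nonneg
      (Finset.range_subset_range.2 (by omega)) (fun k _ _ => ha k)
  have hab : ∀ k m, k ≤ m → a k ≤ b m := by
    intro k m hkm
    have h1 : a k ≤ ∑ j ∈ Finset.range (m+1), a j :=
      Finset.single_le_sum (fun j _ => ha j) (Finset.mem_range.2 (by omega))
    simp [hb]; linarith
  refine ⟨fun m => (1/2 : ℝ)^m / b (m*m+m), ?_, ?_, ?_⟩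
  · intro m
    exact div_pos (pow_pos (by norm_num) m) (hb0 _)
  · intro m m' hmm'
    refine div_le_div₀ (by positivity) ?_ (hb0 _) ?_
    · exact pow_le_pow_of_le_one (by norm_num) (by norm_num) hmm'
    · exact hbmono (by nlinarith)
  · intro n hn r
    set c : ℕ → ℝ := fun m => (1/2 : ℝ)^m / b (m*m+m) with hc
    have hc0 : ∀ m, 0 ≤ c m := fun m => le_of_lt (div_pos (pow_pos (by norm_num) m) (hb0 _))
    have hchalf : ∀ m, c m ≤ (1/2 : ℝ)^m := by
      intro m
      exact div_le_self (by positivity) (hb1 _)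
    set N : ℕ := max n r with hN
    set C : ℝ := b (n*N + r) with hC
    have hC1 : 1 ≤ C := hb1 _
    have key : ∀ m : Fin n → ℕ,
        (∏ i, c (m i)) * a ((∑ i, m i) + r) ≤ C * ∏ i, (1/2 : ℝ)^(m i) := by
      intro m
      have hne : (Finset.univ : Finset (Fin n)).Nonempty := by
        simpa [Finset.univ_nonempty_iff] using Fin.pos_iff_nonempty.1 (by omega)
      obtain ⟨j, -, hj⟩ := Finset.exists_max_image Finset.univ m hne
      have hsum_le : (∑ i, m i) ≤ n * m j := by
        calc (∑ i, m i) ≤ ∑ _i : Fin n, m j :=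
              Finset.sum_le_sum fun i _ => hj i (Finset.mem_univ i)
        _ = n * m j := by simp [mul_comm]
      by_cases hbig : N ≤ m j
      · -- large max coordinate
        have h1 : a ((∑ i, m i) + r) ≤ b (m j * m j + m j) := by
          refine hab _ _ ?_
          have hn' : n ≤ m j := le_trans (le_max_left n r) hbig
          have hr' : r ≤ m j := le_trans (le_max_right n r) hbig
          nlinarith
        have h2 : c (m j) * a ((∑ i, m i) + r) ≤ (1/2 : ℝ)^(m j) := by
          calc c (m j) * a ((∑ i, m i) + r) ≤ c (m j) * b (m j * m j + m j) :=
                mul_le_mul_of_nonneg_left h1 (hc0 _)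
          _ = (1/2 : ℝ)^(m j) := by
                exact div_mul_cancel₀ _ (ne_of_gt (hb0 _))
        have hsplit : (∏ i, c (m i)) = c (m j) * ∏ i ∈ Finset.univ.erase j, c (m i) :=
          (Finset.mul_prod_erase Finset.univ _ (Finset.mem_univ j)).symm
        have hsplit2 : (∏ i, ((1/2 : ℝ))^(m i)) =
            (1/2 : ℝ)^(m j) * ∏ i ∈ Finset.univ.erase j, (1/2 : ℝ)^(m i) :=
          (Finset.mul_prod_erase Finset.univ _ (Finset.mem_univ j)).symm
        calc (∏ i, c (m i)) * a ((∑ i, m i) + r)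
            = (c (m j) * a ((∑ i, m i) + r)) * ∏ i ∈ Finset.univ.erase j, c (m i) := by
              rw [hsplit]; ring
          _ ≤ (1/2 : ℝ)^(m j) * ∏ i ∈ Finset.univ.erase j, (1/2 : ℝ)^(m i) := by
              refine mul_le_mul h2 ?_ (Finset.prod_nonneg fun i _ => hc0 _) (by positivity)
              exact Finset.prod_le_prod (fun i _ => hc0 _) (fun i _ => hchalf _)
          _ = ∏ i, (1/2 : ℝ)^(m i) := hsplit2.symm
          _ ≤ C * ∏ i, (1/2 : ℝ)^(m i) :=
              le_mul_of_one_le_left (by positivity) hC1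
      · -- all coordinates < N
        have h1 : a ((∑ i, m i) + r) ≤ C := by
          refine hab _ _ ?_
          have : (∑ i, m i) ≤ n * N := le_trans hsum_le (by
            have := Nat.lt_of_not_le hbig; exact Nat.mul_le_mul_left n (by omega))
          omega
        calc (∏ i, c (m i)) * a ((∑ i, m i) + r)
            ≤ (∏ i, (1/2 : ℝ)^(m i)) * C := by
              refine mul_le_mul ?_ h1 (ha _) (by positivity)
              exact Finset.prod_le_prod (fun i _ => hc0 _) (fun i _ => hchalf _)
          _ = C * ∏ i, (1/2 : ℝ)^(m i) := by ring
    have hsummable : Summable (fun m : Fin n → ℕ => C * ∏ i, (1/2 : ℝ)^(m i)) := by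
      refine Summable.mul_left C ?_
      exact summable_pi_prod _ (summable_geometric_of_lt_one (by norm_num) (by norm_num))
        (fun k => by positivity) n
    refine Summable.of_nonneg_of_le ?_ key hsummable
    intro m
    exact mul_nonneg (Finset.prod_nonneg fun i _ => hc0 _) (ha _)
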